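/- Let X be a path connected Polish space, x ∈ X, and n ∈ ℕ. Then the set N_n of loops l ∈ L_x whose path-homotopy class [l] ∈ π₁(X,x) has commutator length at most n (i.e., [l] is a product of at most n commutators) is an analytic subset of the loop space L_x. -/

import Mathlib

open CategoryTheory
open scoped Cardinal unitInterval
open scoped commutatorElement

attribute [local instance] Path.Homotopic.setoid

/-- The path-homotopy class of a loop `l` based at `x`, as an element of the
fundamental group `π₁(X, x)`. -/
noncomputable def pathClass {X : Type u} [TopologicalSpace X] {x : X} (l : Path x x) :
    FundamentalGroup X x :=
  FundamentalGroup.fromPath (⟦l⟧ : Path.Homotopic.Quotient x x)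

section Aux
variable {X : Type u} [TopologicalSpace X] {x : X}

theorem pathClass_trans' (a b : Path x x) :
    pathClass (a.trans b) = pathClass b * pathClass a :=
  Path.Homotopic.Quotient.mk_trans a b
theorem pathClass_symm' (a : Path x x) : pathClass a.symm = (pathClass a)⁻¹ := rfl
theorem pathClass_refl' : pathClass (Path.refl x) = 1 := rfl

theorem pathClass_surj' (f : FundamentalGroup X x) : ∃ a : Path x x, pathClass a = f := by
  obtain ⟨a, ha⟩ := Quotient.exists_rep (FundamentalGroup.toPath f)
  exact ⟨a, ha⟩

noncomputable def commLoop (a b : Path x x) : Path x x :=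
  ((b.symm.trans a.symm).trans b).trans a

theorem pathClass_commLoop (a b : Path x x) :
    pathClass (commLoop a b) = ⁅pathClass a, pathClass b⁆ := by
  simp only [commLoop, pathClass_trans', pathClass_symm', commutatorElement_def, mul_assoc]

theorem Continuous.commLoop' {Y : Type*} [TopologicalSpace Y] {f g : Y → Path x x}
    (hf : Continuous f) (hg : Continuous g) : Continuous fun y => commLoop (f y) (g y) :=
  ((((Path.continuous_symm.comp hg).path_trans
      (Path.continuous_symm.comp hf)).path_trans hg).path_trans hf)

noncomputable def bigLoop : ∀ n : ℕ, (Fin n → Path x x) → Path x x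
  | 0, _ => Path.refl x
  | n + 1, c => (bigLoop n fun i => c i.succ).trans (c 0)

theorem bigLoop_succ (n : ℕ) (c : Fin (n+1) → Path x x) :
    bigLoop (n+1) c = (bigLoop n fun i => c i.succ).trans (c 0) := rfl

theorem pathClass_bigLoop (n : ℕ) (c : Fin n → Path x x) :
    pathClass (bigLoop n c) = (List.ofFn fun i => pathClass (c i)).prod := by
  induction n with
  | zero => simpa [bigLoop] using pathClass_refl'
  | succ n ih => rw [bigLoop_succ, pathClass_trans', ih, List.ofFn_succ, List.prod_cons]

theorem continuous_bigLoop (n : ℕ) :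
    Continuous fun c : Fin n → Path x x => bigLoop n c := by
  induction n with
  | zero => exact continuous_const
  | succ n ih =>
    show Continuous fun c : Fin (n+1) → Path x x => (bigLoop n fun i => c i.succ).trans (c 0)
    exact (ih.comp (continuous_pi fun i => continuous_apply i.succ)).path_trans
      (continuous_apply 0)

theorem continuous_T (n : ℕ) :
    Continuous fun p : (Fin n → Path x x) × (Fin n → Path x x) =>
      bigLoop n fun i => commLoop (p.1 i) (p.2 i) := by
  apply (continuous_bigLoop n).comp
  apply continuous_pi
  intro i
  exact ((continuous_apply (A := fun _ : Fin n => Path x x) i).fst'.commLoop'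
    (continuous_apply (A := fun _ : Fin n => Path x x) i).snd')

end Aux

instance polishCM {K : Type*} [MetricSpace K] [CompactSpace K] [SecondCountableTopology K]
    (X : Type*) [TopologicalSpace X] [PolishSpace X] : PolishSpace C(K, X) := by
  letI := TopologicalSpace.upgradeIsCompletelyMetrizable X
  infer_instance

theorem pathEmb {X : Type*} [TopologicalSpace X] [T2Space X] (x y : X) :
    Topology.IsClosedEmbedding ((↑) : Path x y → C(I, X)) := by
  refine ⟨⟨⟨rfl⟩, fun p q h => ?_⟩, ?_⟩
  · ext t; exact congrFun (congrArg DFunLike.coe h) t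
  · have : Set.range ((↑) : Path x y → C(I, X)) = {f : C(I,X) | f 0 = x ∧ f 1 = y} := by
      ext f
      constructor
      · rintro ⟨p, rfl⟩; exact ⟨p.source, p.target⟩
      · rintro ⟨h0, h1⟩; exact ⟨⟨f, h0, h1⟩, rfl⟩
    rw [this]
    exact (isClosed_eq (ContinuousEvalConst.continuous_eval_const 0) continuous_const).inter
      (isClosed_eq (ContinuousEvalConst.continuous_eval_const 1) continuous_const)

instance pathPolish {X : Type*} [TopologicalSpace X] [PolishSpace X] (x y : X) :
    PolishSpace (Path x y) := by
  letI := TopologicalSpace.upgradeIsCompletelyMetrizable X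
  exact (pathEmb x y).polishSpace


set_option maxHeartbeats 1000000 in
/-- For a path connected Polish space `X`, a basepoint `x` and `n : ℕ`,
the set of loops at `x` whose path-homotopy class is a product of at most `n` commutators
in `π₁(X,x)` is an analytic subset of the loop space. -/
theorem stmt12 (X : Type) [TopologicalSpace X] [PolishSpace X] [PathConnectedSpace X]
    (x : X) (n : ℕ) :
    MeasureTheory.AnalyticSet {l : Path x x | ∃ f g : Fin n → FundamentalGroup X x,
      pathClass l = (List.ofFn fun i => ⁅f i, g i⁆).prod} := by
  classical
  set P := Path x x
  -- the continuous "product of commutators" map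
  set T : ((Fin n → P) × (Fin n → P)) → P :=
    fun p => bigLoop n fun i => commLoop (p.1 i) (p.2 i) with hT
  have hTcont : Continuous T := continuous_T n
  have hTclass : ∀ p, pathClass (T p) =
      (List.ofFn fun i => ⁅pathClass (p.1 i), pathClass (p.2 i)⁆).prod := by
    intro p
    rw [hT]
    rw [pathClass_bigLoop]
    congr 1
    exact congrArg List.ofFn (funext fun i => pathClass_commLoop _ _)
  -- the closed "witness" set
  set W := P × (((Fin n → P) × (Fin n → P)) × C(I × I, X))
  set A : Set W := {q | (∀ t, q.2.2 (0, t) = q.1 t) ∧ (∀ t, q.2.2 (1, t) = T q.2.1 t) ∧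
      (∀ s, q.2.2 (s, 0) = x) ∧ (∀ s, q.2.2 (s, 1) = x)} with hA
  have hF : Continuous fun q : W => q.2.2 := continuous_snd.comp continuous_snd
  have hAclosed : IsClosed A := by
    rw [hA]
    simp only [Set.setOf_and, Set.setOf_forall]
    refine IsClosed.inter ?_ (IsClosed.inter ?_ (IsClosed.inter ?_ ?_))
    · exact isClosed_iInter fun t => isClosed_eq
        ((ContinuousEvalConst.continuous_eval_const (0, t)).comp hF)
        ((ContinuousEvalConst.continuous_eval_const t).comp continuous_fst)
    · exact isClosed_iInter fun t => isClosed_eq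
        ((ContinuousEvalConst.continuous_eval_const (1, t)).comp hF)
        ((ContinuousEvalConst.continuous_eval_const t).comp
          (hTcont.comp (continuous_fst.comp continuous_snd)))
    · exact isClosed_iInter fun s => isClosed_eq
        ((ContinuousEvalConst.continuous_eval_const (s, 0)).comp hF) continuous_const
    · exact isClosed_iInter fun s => isClosed_eq
        ((ContinuousEvalConst.continuous_eval_const (s, 1)).comp hF) continuous_const
  -- the target set is the first-coordinate projection of A
  have hset : {l : P | ∃ f g : Fin n → FundamentalGroup X x,
      pathClass l = (List.ofFn fun i => ⁅f i, g i⁆).prod} = Prod.fst '' A := by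
    ext l
    constructor
    · rintro ⟨f, g, hl⟩
      choose a ha using fun i => pathClass_surj' (f i)
      choose b hb using fun i => pathClass_surj' (g i)
      have hlT : pathClass l = pathClass (T (a, b)) := by
        rw [hTclass]
        simp only [ha, hb]
        exact hl
      have : (⟦l⟧ : Path.Homotopic.Quotient x x) = ⟦T (a, b)⟧ := hlT
      obtain ⟨H⟩ : l.Homotopic (T (a, b)) := Quotient.exact this
      refine ⟨(l, (a, b), H.toContinuousMap), ⟨?_, ?_, ?_, ?_⟩, rfl⟩
      · exact fun t => H.apply_zero t
      · exact fun t => H.apply_one t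
      · exact fun s => (H.eq_fst s (.inl rfl)).trans l.source
      · exact fun s => (H.eq_fst s (.inr rfl)).trans l.target
    · rintro ⟨⟨l', p, F⟩, ⟨h0, h1, hs0, hs1⟩, rfl⟩
      refine ⟨fun i => pathClass (p.1 i), fun i => pathClass (p.2 i), ?_⟩
      have H : l'.Homotopy (T p) :=
        { toContinuousMap := F
          map_zero_left := h0
          map_one_left := h1
          prop' := by
            rintro s t (rfl | rfl)
            · exact (hs0 s).trans l'.source.symm
            · exact (hs1 s).trans l'.target.symm }
      have : pathClass l' = pathClass (T p) := (Quotient.sound ⟨H⟩ : (⟦l'⟧ : Path.Homotopic.Quotient x x) = ⟦T p⟧)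
      rw [this, hTclass]
  rw [hset]
  exact hAclosed.analyticSet.image_of_continuous continuous_fst
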